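/- Let X be a regular simplicial set of finite dimension and U a finite simplicial set (finitely many non-degenerate simplices). Then the internal hom Hom(U, X) has finite dimension; moreover dim Hom(U,X) ≤ (Σ_u (|u|+1)) · dim X, where u ranges over the non-degenerate simplices of U and |u| is the degree of u. In particular, if X is additionally finite, then Hom(U, X) is finite. -/

import Mathlib

open CategoryTheory Simplicial MonoidalCategory SSet Limits

open SimplexCategory Opposite

universe u v

/-- A simplex is degenerate if it is the image of a degeneracy map. -/
def SDeg (X : SSet.{u}) : ∀ {n : ℕ}, X _⦋n⦌ → Prop := fun {n} x => match n, x with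
  | 0, _ => False
  | n + 1, x => ∃ (i : Fin (n + 1)) (y : X _⦋n⦌), x = X.map (SimplexCategory.σ i).op y

/-- The `i`-th elementary edge `X(φ(i,i+1))(x)` of a `p`-simplex `x`. -/
def elemEdge (X : SSet.{u}) {p : ℕ} (x : X _⦋p⦌) (i : Fin p) : X _⦋1⦌ :=
  X.map (SimplexCategory.mkOfLe i.castSucc i.succ (Fin.castSucc_lt_succ (i := i)).le).op x

/-- A simplicial set is regular (property `P_1`) if any simplex with a degenerate
`i`-th elementary edge is an `i`-th degeneracy. -/
def SReg (X : SSet.{u}) : Prop :=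
  ∀ (p : ℕ) (x : X _⦋p + 1⦌) (i : Fin (p + 1)),
    SDeg X (elemEdge X x i) → ∃ y : X _⦋p⦌, x = X.map (SimplexCategory.σ i).op y

/-- The internal hom of simplicial sets: its `p`-simplices are the
simplicial maps `Δ[p] ⊗ U ⟶ X`. -/
noncomputable def sHom (U X : SSet.{u}) : SSet.{u} where
  obj m := SSet.stdSimplex.obj m.unop ⊗ U ⟶ X
  map φ := TypeCat.ofHom fun f => (SSet.stdSimplex.map φ.unop ▷ U) ≫ f
  map_id m := by ext f : 3; simp [CategoryTheory.Functor.map_id SSet.stdSimplex]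
  map_comp φ ψ := by ext f : 3; simp [CategoryTheory.Functor.map_comp SSet.stdSimplex]

namespace Stmt17


lemma sdeg_succ_iff {X : SSet.{u}} {n : ℕ} (x : X _⦋n+1⦌) :
    SDeg X x ↔ ∃ (i : Fin (n + 1)) (y : X _⦋n⦌), x = X.map (σ i).op y := Iff.rfl

lemma not_sdeg_zero {X : SSet.{u}} (x : X _⦋0⦌) : ¬ SDeg X x := fun h => h

lemma coll_apply {n : ℕ} (k : Fin (n+1)) (x : Fin (n+2)) :
    (σ k ≫ δ k.succ).toOrderHom x = if x = k.succ then k.castSucc else x := by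
  dsimp [σ, δ]
  change k.succ.succAbove (k.predAbove x) = if x = k.succ then k.castSucc else x
  rcases lt_trichotomy x k.succ with h | h | h
  · rw [if_neg (ne_of_lt h)]
    have hx : x ≤ k.castSucc := Fin.le_castSucc_iff.mpr h
    rw [Fin.predAbove_of_le_castSucc _ _ hx,
      Fin.succAbove_of_castSucc_lt _ _ (by rwa [Fin.castSucc_castPred]),
      Fin.castSucc_castPred]
  · rw [if_pos h, h, Fin.predAbove_of_castSucc_lt _ _ (Fin.castSucc_lt_succ (i := k)),
      Fin.pred_succ, Fin.succAbove_of_castSucc_lt _ _ (Fin.castSucc_lt_succ (i := k))]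
  · rw [if_neg (ne_of_gt h),
      Fin.predAbove_of_castSucc_lt _ _ ((Fin.castSucc_lt_succ (i := k)).trans h),
      Fin.succAbove_of_le_castSucc _ _ (by
        rw [Fin.le_def, Fin.coe_castSucc, Fin.coe_pred]
        rw [Fin.lt_def] at h
        simp only [Fin.val_succ] at h ⊢
        omega),
      Fin.succ_pred]

lemma factor_deg {n : ℕ} {T : SimplexCategory} (g : (⦋n+1⦌ : SimplexCategory) ⟶ T)
    (k : Fin (n+1)) (h : g.toOrderHom k.castSucc = g.toOrderHom k.succ) :
    g = σ k ≫ (δ k.succ ≫ g) := by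
  ext x : 3
  simp only [comp_toOrderHom, OrderHom.comp_coe, Function.comp_apply]
  have : (δ k.succ).toOrderHom ((σ k).toOrderHom x)
      = (σ k ≫ δ k.succ).toOrderHom x := rfl
  rw [this, coll_apply]
  split_ifs with hx
  · rw [hx, ← h]
  · rfl

lemma sigma_surj {n : ℕ} (i : Fin (n+1)) : Function.Surjective (σ i).toOrderHom := by
  intro x
  refine ⟨(δ i.castSucc).toOrderHom x, ?_⟩
  have := congrArg (fun f => SimplexCategory.Hom.toOrderHom f x)
    (SimplexCategory.δ_comp_σ_self (i := i))
  simpa using this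

lemma f_nat {U X : SSet.{u}} {P : ℕ} (f : SSet.stdSimplex.obj ⦋P⦌ ⊗ U ⟶ X)
    {n n' : ℕ} (β : (⦋n'⦌ : SimplexCategory) ⟶ ⦋n⦌) (ξ : (⦋n⦌ : SimplexCategory) ⟶ ⦋P⦌)
    (w : U.obj (op ⦋n⦌)) :
    f.app (op ⦋n'⦌) (ULift.up (β ≫ ξ), U.map β.op w)
      = X.map β.op (f.app (op ⦋n⦌) (ULift.up ξ, w)) :=
  NatTrans.naturality_apply f β.op ((ULift.up ξ, w) : (SSet.stdSimplex.obj ⦋P⦌ ⊗ U).obj (op ⦋n⦌))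

lemma f_nat2 {U X : SSet.{u}} {P : ℕ} (f : SSet.stdSimplex.obj ⦋P⦌ ⊗ U ⟶ X)
    {n n' m : ℕ} (β : (⦋n'⦌ : SimplexCategory) ⟶ ⦋n⦌) (ξ : (⦋n⦌ : SimplexCategory) ⟶ ⦋P⦌)
    (τ : (⦋n⦌ : SimplexCategory) ⟶ ⦋m⦌) (u : U _⦋m⦌) :
    f.app (op ⦋n'⦌) (ULift.up (β ≫ ξ), U.map (β ≫ τ).op u)
      = X.map β.op (f.app (op ⦋n⦌) (ULift.up ξ, U.map τ.op u)) := by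
  rw [op_comp, FunctorToTypes.map_comp_apply]
  exact f_nat f β ξ (U.map τ.op u)

lemma exists_nondeg (U : SSet.{u}) : ∀ (n : ℕ) (u : U _⦋n⦌),
    ∃ (m : ℕ) (α : (⦋n⦌ : SimplexCategory) ⟶ ⦋m⦌) (u' : U _⦋m⦌),
      ¬ SDeg U u' ∧ u = U.map α.op u' := fun n u => match n, u with
  | 0, u => ⟨0, 𝟙 _, u, not_sdeg_zero u, by simp⟩
  | (n+1), u => by
    by_cases h : SDeg U u
    · obtain ⟨i, y, rfl⟩ := h
      obtain ⟨m, α, u', h1, h2⟩ := exists_nondeg U n y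
      exact ⟨m, σ i ≫ α, u', h1, by rw [h2, op_comp, FunctorToTypes.map_comp_apply]⟩
    · exact ⟨n+1, 𝟙 _, u, h, by simp⟩

lemma exists_small (X : SSet.{u}) (q : ℕ)
    (hq : ∀ (m : ℕ) (x : X _⦋m + 1⦌), q < m + 1 → SDeg X x) :
    ∀ (n : ℕ) (x : X _⦋n⦌),
    ∃ (d : ℕ) (e : (⦋n⦌ : SimplexCategory) ⟶ ⦋d⦌) (y : X _⦋d⦌),
      d ≤ q ∧ Function.Surjective e.toOrderHom ∧ x = X.map e.op y := by
  intro n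
  induction n with
  | zero => exact fun x => ⟨0, 𝟙 _, x, Nat.zero_le q, fun z => ⟨z, rfl⟩, by simp⟩
  | succ n ih =>
    intro x
    by_cases h : q < n + 1
    · obtain ⟨i, y, rfl⟩ := hq n x h
      obtain ⟨d, e, z, hd, he, hz⟩ := ih y
      refine ⟨d, σ i ≫ e, z, hd, ?_, by rw [hz, op_comp, FunctorToTypes.map_comp_apply]⟩
      have : (σ i ≫ e).toOrderHom = e.toOrderHom.comp (σ i).toOrderHom := rfl
      rw [this]
      exact he.comp (sigma_surj i)
    · exact ⟨n+1, 𝟙 _, x, not_lt.mp h, fun z => ⟨z, rfl⟩, by simp⟩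

lemma card_incr {n r : ℕ} (g : Fin (n+1) → Fin (r+1)) (hg : Monotone g) :
    (Finset.univ.filter (fun j : Fin n => g j.castSucc < g j.succ)).card ≤ r := by
  classical
  have : (Finset.univ.filter (fun j : Fin n => g j.castSucc < g j.succ)).card
      ≤ ((Finset.univ : Finset (Fin (r+1))).erase 0).card := by
    apply Finset.card_le_card_of_injOn (fun j => g j.succ)
    · intro j hj
      simp only [Finset.coe_filter, Finset.mem_coe, Finset.mem_filter, Finset.mem_univ, true_and, Set.mem_setOf_eq] at hj
      exact Finset.mem_erase.mpr ⟨Fin.pos_iff_ne_zero.mp (lt_of_le_of_lt (Fin.zero_le _) hj),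
        Finset.mem_univ _⟩
    · intro a ha b hb hab
      simp only [Finset.mem_coe, Finset.mem_filter, Finset.mem_univ, true_and] at ha hb
      by_contra hne
      rcases lt_or_gt_of_ne hne with hlt | hlt
      · have : g a.succ ≤ g b.castSucc := hg (by
          rw [Fin.le_def, Fin.val_succ, Fin.coe_castSucc]
          exact hlt)
        exact absurd hab (ne_of_lt (lt_of_le_of_lt this hb))
      · have : g b.succ ≤ g a.castSucc := hg (by
          rw [Fin.le_def, Fin.val_succ, Fin.coe_castSucc]
          exact hlt)
        exact absurd hab.symm (ne_of_lt (lt_of_le_of_lt this ha))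
  simpa using this

open scoped Classical in
lemma card_nondeg_edges (X : SSet.{u}) (q : ℕ)
    (hq : ∀ (m : ℕ) (x : X _⦋m + 1⦌), q < m + 1 → SDeg X x)
    {n : ℕ} (x : X _⦋n⦌) :
    (Finset.univ.filter fun i : Fin n => ¬ SDeg X (elemEdge X x i)).card ≤ q := by
  classical
  obtain ⟨d, e, y, hd, -, rfl⟩ := exists_small X q hq n x
  refine le_trans (le_trans (Finset.card_le_card ?_)
    (card_incr e.toOrderHom e.toOrderHom.monotone)) hd
  intro i hi
  simp only [Finset.mem_filter, Finset.mem_univ, true_and] at hi ⊢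
  by_contra hlt
  apply hi
  have heq : e.toOrderHom i.castSucc = e.toOrderHom i.succ :=
    le_antisymm (e.toOrderHom.monotone (Fin.castSucc_le_succ i)) (not_lt.mp hlt)
  set φ : (⦋1⦌ : SimplexCategory) ⟶ ⦋n⦌ :=
    SimplexCategory.mkOfLe i.castSucc i.succ (Fin.castSucc_lt_succ (i := i)).le with hφ
  have hedge : elemEdge X (X.map e.op y) i = X.map (φ ≫ e).op y := by
    rw [elemEdge, op_comp, FunctorToTypes.map_comp_apply]
  have hcond : (φ ≫ e).toOrderHom (Fin.castSucc (0 : Fin 1))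
      = (φ ≫ e).toOrderHom (Fin.succ (0 : Fin 1)) := heq
  rw [hedge, factor_deg (φ ≫ e) 0 hcond, op_comp, FunctorToTypes.map_comp_apply]
  exact ⟨0, X.map (δ (Fin.succ 0) ≫ φ ≫ e).op y, rfl⟩






/-- The test simplex `x'(u,j) = f(id, u∘const_j)`. -/
def cyl {X U : SSet.{u}} {p : ℕ} (f : SSet.stdSimplex.obj ⦋p+1⦌ ⊗ U ⟶ X)
    {m : ℕ} (u : U _⦋m⦌) (j : Fin (m+1)) : X _⦋p+1⦌ :=
  f.app (op ⦋p+1⦌) (ULift.up (𝟙 _), U.map (SimplexCategory.const ⦋p+1⦌ ⦋m⦌ j).op u)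

lemma cyl_edge {X U : SSet.{u}} {p : ℕ} (f : SSet.stdSimplex.obj ⦋p+1⦌ ⊗ U ⟶ X)
    {m : ℕ} (u : U _⦋m⦌) (j : Fin (m+1)) (i : Fin (p+1)) :
    elemEdge X (cyl f u j) i
      = f.app (op ⦋1⦌) (ULift.up (mkOfLe i.castSucc i.succ (Fin.castSucc_lt_succ (i := i)).le),
          U.map (SimplexCategory.const ⦋1⦌ ⦋m⦌ j).op u) := by
  set φ : (⦋1⦌ : SimplexCategory) ⟶ ⦋p+1⦌ :=
    mkOfLe i.castSucc i.succ (Fin.castSucc_lt_succ (i := i)).le with hφ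
  have h1 : φ ≫ 𝟙 (⦋p+1⦌ : SimplexCategory) = φ := Category.comp_id φ
  have h2 : φ ≫ SimplexCategory.const ⦋p+1⦌ ⦋m⦌ j = SimplexCategory.const ⦋1⦌ ⦋m⦌ j := rfl
  rw [elemEdge, cyl, ← f_nat2 f φ (𝟙 _) (SimplexCategory.const ⦋p+1⦌ ⦋m⦌ j) u, h1, h2]

lemma comp_coll_eq_self {n p : ℕ} (i : Fin (p+1)) (ξ : (⦋n⦌ : SimplexCategory) ⟶ ⦋p+1⦌)
    (h : ∀ z : Fin (n+1), ξ.toOrderHom z ≠ i.succ) : ξ ≫ (σ i ≫ δ i.succ) = ξ := by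
  ext z : 3
  have : (ξ ≫ (σ i ≫ δ i.succ)).toOrderHom z
      = (σ i ≫ δ i.succ).toOrderHom (ξ.toOrderHom z) := rfl
  rw [this, coll_apply, if_neg (h z)]



open scoped Classical in
set_option maxHeartbeats 1000000 in
lemma ind {X U : SSet.{u}} (hX : SReg X) {p : ℕ}
    (f : SSet.stdSimplex.obj ⦋p+1⦌ ⊗ U ⟶ X) (i : Fin (p+1))
    {m : ℕ} (u : U _⦋m⦌)
    (H : ∀ j : Fin (m+1), SDeg X (elemEdge X (cyl f u j) i)) :
    ∀ (t : ℕ) (n : ℕ) (ξ : (⦋n⦌ : SimplexCategory) ⟶ ⦋p+1⦌) (τ : (⦋n⦌ : SimplexCategory) ⟶ ⦋m⦌),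
      (Finset.univ.filter fun z : Fin (n+1) => ξ.toOrderHom z = i.succ).card ≤ t →
      f.app (op ⦋n⦌) (ULift.up (ξ ≫ (σ i ≫ δ i.succ)), U.map τ.op u)
        = f.app (op ⦋n⦌) (ULift.up ξ, U.map τ.op u) := by
  intro t
  induction t with
  | zero =>
    intro n ξ τ h
    rw [comp_coll_eq_self i ξ (fun z hz => by
      have hmem : z ∈ Finset.univ.filter (fun z : Fin (n+1) => ξ.toOrderHom z = i.succ) := by
        simpa using hz
      rw [Finset.card_eq_zero.mp (Nat.le_zero.mp h)] at hmem
      exact absurd hmem (Finset.notMem_empty z))]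
  | succ t ih =>
    intro n ξ τ hcard
    by_cases hne : (Finset.univ.filter fun z : Fin (n+1) => ξ.toOrderHom z = i.succ) = ∅
    · rw [comp_coll_eq_self i ξ (fun z hz => by
        have hmem : z ∈ Finset.univ.filter (fun z : Fin (n+1) => ξ.toOrderHom z = i.succ) := by
          simpa using hz
        rw [hne] at hmem
        exact absurd hmem (Finset.notMem_empty z))]
    have hSne : (Finset.univ.filter fun z : Fin (n+1) => ξ.toOrderHom z = i.succ).Nonempty :=
      Finset.nonempty_of_ne_empty hne
    set S := Finset.univ.filter (fun z : Fin (n+1) => ξ.toOrderHom z = i.succ) with hS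
    set j₀ : Fin (n+1) := S.min' hSne with hj₀def
    have hj₀ : ξ.toOrderHom j₀ = i.succ := (Finset.mem_filter.mp (S.min'_mem hSne)).2
    have hmin : ∀ z : Fin (n+1), z < j₀ → ξ.toOrderHom z ≠ i.succ := fun z hz hzz =>
      absurd (S.min'_le z (Finset.mem_filter.mpr ⟨Finset.mem_univ _, hzz⟩)) (not_le.mpr hz)
    -- the inserted map ξ'
    have hmono : Monotone (fun x : Fin (n+2) =>
        if x = j₀.castSucc then i.castSucc else ξ.toOrderHom (j₀.predAbove x)) := by
      intro a b hab
      by_cases ha : a = j₀.castSucc <;> by_cases hb : b = j₀.castSucc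
      · simp [ha, hb]
      · simp only [ha, if_pos, if_neg hb]
        have hb' : j₀.castSucc < b := lt_of_le_of_ne (ha ▸ hab) (Ne.symm hb)
        have : j₀ ≤ j₀.predAbove b := by
          have := Fin.predAbove_right_monotone j₀ (Fin.castSucc_lt_iff_succ_le.mp hb')
          rwa [Fin.predAbove_succ_self] at this
        calc i.castSucc ≤ i.succ := (Fin.castSucc_lt_succ (i := i)).le
          _ = ξ.toOrderHom j₀ := hj₀.symm
          _ ≤ _ := ξ.toOrderHom.monotone this
      · simp only [hb, if_pos, if_neg ha]
        have ha' : a < j₀.castSucc := lt_of_le_of_ne (hb ▸ hab) ha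
        have hpa : j₀.predAbove a < j₀ := by
          rw [Fin.predAbove_of_le_castSucc _ _ ha'.le]
          rw [Fin.lt_def] at ha' ⊢
          simpa using ha'
        have h1 : ξ.toOrderHom (j₀.predAbove a) ≤ i.succ :=
          hj₀ ▸ ξ.toOrderHom.monotone hpa.le
        have h2 : ξ.toOrderHom (j₀.predAbove a) ≠ i.succ := hmin _ hpa
        exact Fin.le_castSucc_iff.mpr (lt_of_le_of_ne h1 h2)
      · simp only [if_neg ha, if_neg hb]
        exact ξ.toOrderHom.monotone (Fin.predAbove_right_monotone j₀ hab)
    set ξ' : (⦋n+1⦌ : SimplexCategory) ⟶ ⦋p+1⦌ := SimplexCategory.mkHom ⟨_, hmono⟩ with hξ'def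
    have hξ'val : ∀ x, ξ'.toOrderHom x
        = if x = j₀.castSucc then i.castSucc else ξ.toOrderHom (j₀.predAbove x) := fun _ => rfl
    have hv1 : ξ'.toOrderHom j₀.castSucc = i.castSucc := by rw [hξ'val, if_pos rfl]
    have hv2 : ξ'.toOrderHom j₀.succ = i.succ := by
      rw [hξ'val, if_neg (Fin.castSucc_lt_succ (i := j₀)).ne', Fin.predAbove_succ_self, hj₀]
    set τ' : (⦋n+1⦌ : SimplexCategory) ⟶ ⦋m⦌ := σ j₀ ≫ τ with hτ'def
    -- removing the inserted point recovers ξ, τ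
    have hδξ : δ j₀.castSucc ≫ ξ' = ξ := by
      ext z : 3
      have hz : (δ j₀.castSucc ≫ ξ').toOrderHom z
          = ξ'.toOrderHom ((δ j₀.castSucc).toOrderHom z) := rfl
      have hne' : (δ j₀.castSucc).toOrderHom z ≠ j₀.castSucc := by
        exact Fin.succAbove_ne j₀.castSucc z
      have hps : j₀.predAbove ((δ j₀.castSucc).toOrderHom z) = z := by
        have := congrArg (fun g => SimplexCategory.Hom.toOrderHom g z)
          (SimplexCategory.δ_comp_σ_self (i := j₀))
        exact this
      rw [hz, hξ'val, if_neg hne', hps]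
    have hδτ : δ j₀.castSucc ≫ τ' = τ := by
      rw [hτ'def, ← Category.assoc, SimplexCategory.δ_comp_σ_self, Category.id_comp]
    have hδτ2 : δ j₀.succ ≫ τ' = τ := by
      rw [hτ'def, ← Category.assoc, SimplexCategory.δ_comp_σ_succ, Category.id_comp]
    set ξ'' : (⦋n⦌ : SimplexCategory) ⟶ ⦋p+1⦌ := δ j₀.succ ≫ ξ' with hξ''def
    -- values of ξ''
    have hξ''val : ∀ z : Fin (n+1), z ≠ j₀ → ξ''.toOrderHom z = ξ.toOrderHom z := by
      intro z hz
      have h0 : ξ''.toOrderHom z = ξ'.toOrderHom ((δ j₀.succ).toOrderHom z) := rfl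
      have hne' : (δ j₀.succ).toOrderHom z ≠ j₀.castSucc := by
        intro hcon
        apply hz
        have hps : j₀.predAbove ((δ j₀.succ).toOrderHom z) = z := by
          have := congrArg (fun g => SimplexCategory.Hom.toOrderHom g z)
            (SimplexCategory.δ_comp_σ_succ (i := j₀))
          exact this
        rw [hcon, Fin.predAbove_castSucc_self] at hps
        exact hps.symm
      have hps : j₀.predAbove ((δ j₀.succ).toOrderHom z) = z := by
        have := congrArg (fun g => SimplexCategory.Hom.toOrderHom g z)
          (SimplexCategory.δ_comp_σ_succ (i := j₀))
        exact this
      rw [h0, hξ'val, if_neg hne', hps]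
    -- the count decreases
    have hcount : (Finset.univ.filter fun z : Fin (n+1) => ξ''.toOrderHom z = i.succ).card ≤ t := by
      have hsub : (Finset.univ.filter fun z : Fin (n+1) => ξ''.toOrderHom z = i.succ) ⊆
          S.erase j₀ := by
        intro z hzmem
        simp only [Finset.mem_filter, Finset.mem_univ, true_and] at hzmem
        have hzj : z ≠ j₀ := by
          intro hcon
          rw [hcon] at hzmem
          have : ξ''.toOrderHom j₀ = i.castSucc := by
            have h0 : ξ''.toOrderHom j₀ = ξ'.toOrderHom ((δ j₀.succ).toOrderHom j₀) := rfl
            have : (δ j₀.succ).toOrderHom j₀ = j₀.castSucc :=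
              Fin.succAbove_of_castSucc_lt _ _ (Fin.castSucc_lt_succ (i := j₀))
            rw [h0, this, hv1]
          rw [this] at hzmem
          exact absurd hzmem (Fin.castSucc_lt_succ (i := i)).ne
        refine Finset.mem_erase.mpr ⟨hzj, ?_⟩
        rw [hS]
        simp only [Finset.mem_filter, Finset.mem_univ, true_and]
        rw [← hξ''val z hzj]
        exact hzmem
      have hj₀S : j₀ ∈ S := S.min'_mem hSne
      have := Finset.card_le_card hsub
      rw [Finset.card_erase_of_mem hj₀S] at this
      omega
    -- the inserted simplex
    set xt := f.app (op ⦋n+1⦌) (ULift.up ξ', U.map τ'.op u) with hxt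
    -- its j₀-th elementary edge is an edge of a cylinder simplex, hence degenerate
    have hedge : elemEdge X xt j₀ = elemEdge X (cyl f u (τ.toOrderHom j₀)) i := by
      rw [cyl_edge]
      set φ₀ : (⦋1⦌ : SimplexCategory) ⟶ ⦋n+1⦌ :=
        mkOfLe j₀.castSucc j₀.succ (Fin.castSucc_lt_succ (i := j₀)).le with hφ₀
      have e1 : φ₀ ≫ ξ' = mkOfLe i.castSucc i.succ (Fin.castSucc_lt_succ (i := i)).le := by
        apply SimplexCategory.Hom.ext_one_left
        · exact hv1
        · exact hv2
      have e2 : φ₀ ≫ τ' = SimplexCategory.const ⦋1⦌ ⦋m⦌ (τ.toOrderHom j₀) := by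
        apply SimplexCategory.Hom.ext_one_left
        · show τ'.toOrderHom j₀.castSucc = τ.toOrderHom j₀
          show τ.toOrderHom (j₀.predAbove j₀.castSucc) = τ.toOrderHom j₀
          rw [Fin.predAbove_castSucc_self]
        · show τ'.toOrderHom j₀.succ = τ.toOrderHom j₀
          show τ.toOrderHom (j₀.predAbove j₀.succ) = τ.toOrderHom j₀
          rw [Fin.predAbove_succ_self]
      rw [elemEdge, hxt, ← f_nat2 f φ₀ ξ' τ' u, e1, e2]
    obtain ⟨y, hy⟩ := hX n xt j₀ (hedge ▸ H (τ.toOrderHom j₀))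
    -- the two faces of xt agree
    have hfaces : X.map (δ j₀.castSucc).op xt = X.map (δ j₀.succ).op xt := by
      rw [hy, ← FunctorToTypes.map_comp_apply, ← FunctorToTypes.map_comp_apply,
        ← op_comp, ← op_comp, SimplexCategory.δ_comp_σ_self, SimplexCategory.δ_comp_σ_succ]
    have hface1 : X.map (δ j₀.castSucc).op xt = f.app (op ⦋n⦌) (ULift.up ξ, U.map τ.op u) := by
      rw [hxt, ← f_nat2 f (δ j₀.castSucc) ξ' τ' u, hδξ, hδτ]
    have hface2 : X.map (δ j₀.succ).op xt = f.app (op ⦋n⦌) (ULift.up ξ'', U.map τ.op u) := by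
      rw [hxt, ← f_nat2 f (δ j₀.succ) ξ' τ' u, hδτ2]
    -- factorization of the collapsed map
    have hcond : (ξ' ≫ (σ i ≫ δ i.succ)).toOrderHom j₀.castSucc
        = (ξ' ≫ (σ i ≫ δ i.succ)).toOrderHom j₀.succ := by
      have e1 : (ξ' ≫ (σ i ≫ δ i.succ)).toOrderHom j₀.castSucc
          = (σ i ≫ δ i.succ).toOrderHom (ξ'.toOrderHom j₀.castSucc) := rfl
      have e2 : (ξ' ≫ (σ i ≫ δ i.succ)).toOrderHom j₀.succ
          = (σ i ≫ δ i.succ).toOrderHom (ξ'.toOrderHom j₀.succ) := rfl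
      rw [e1, e2, hv1, hv2, coll_apply, coll_apply, if_neg (Fin.castSucc_lt_succ (i := i)).ne,
        if_pos rfl]
    have hfac : ξ' ≫ (σ i ≫ δ i.succ) = σ j₀ ≫ (ξ'' ≫ (σ i ≫ δ i.succ)) := by
      have := factor_deg (ξ' ≫ (σ i ≫ δ i.succ)) j₀ hcond
      rw [this, hξ''def]
      simp only [Category.assoc]
    -- main computation
    calc f.app (op ⦋n⦌) (ULift.up (ξ ≫ (σ i ≫ δ i.succ)), U.map τ.op u)
        = X.map (δ j₀.castSucc).op
            (f.app (op ⦋n+1⦌) (ULift.up (ξ' ≫ (σ i ≫ δ i.succ)), U.map τ'.op u)) := by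
          rw [← f_nat2 f (δ j₀.castSucc) (ξ' ≫ (σ i ≫ δ i.succ)) τ' u, hδτ,
            ← Category.assoc (δ j₀.castSucc) ξ' (σ i ≫ δ i.succ), hδξ]
      _ = X.map (δ j₀.castSucc).op (X.map (σ j₀).op
            (f.app (op ⦋n⦌) (ULift.up (ξ'' ≫ (σ i ≫ δ i.succ)), U.map τ.op u))) := by
          rw [hfac, ← f_nat2 f (σ j₀) (ξ'' ≫ (σ i ≫ δ i.succ)) τ u, hτ'def]
      _ = f.app (op ⦋n⦌) (ULift.up (ξ'' ≫ (σ i ≫ δ i.succ)), U.map τ.op u) := by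
          rw [← FunctorToTypes.map_comp_apply, ← op_comp, SimplexCategory.δ_comp_σ_self,
            op_id, FunctorToTypes.map_id_apply]
      _ = f.app (op ⦋n⦌) (ULift.up ξ'', U.map τ.op u) := ih n ξ'' τ hcount
      _ = X.map (δ j₀.succ).op xt := hface2.symm
      _ = X.map (δ j₀.castSucc).op xt := hfaces.symm
      _ = f.app (op ⦋n⦌) (ULift.up ξ, U.map τ.op u) := hface1



open scoped Classical in
lemma main_deg {X U : SSet.{u}} (hX : SReg X) {p : ℕ}
    (s : Finset (Σ m : ℕ, U _⦋m⦌)) (hs : ∀ x : Σ m : ℕ, U _⦋m⦌, x ∈ s ↔ ¬ SDeg U x.2)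
    (f : SSet.stdSimplex.obj ⦋p+1⦌ ⊗ U ⟶ X) (i : Fin (p+1))
    (H : ∀ (w : Σ m : ℕ, U _⦋m⦌), w ∈ s → ∀ j : Fin (w.1+1),
      SDeg X (elemEdge X (cyl f w.2 j) i)) :
    f = (SSet.stdSimplex.map (σ i) ▷ U) ≫ ((SSet.stdSimplex.map (δ i.succ) ▷ U) ≫ f) := by
  have key : ∀ (n : ℕ) (ξ : (⦋n⦌ : SimplexCategory) ⟶ ⦋p+1⦌) (w : U.obj (op ⦋n⦌)),
      f.app (op ⦋n⦌) (ULift.up (ξ ≫ (σ i ≫ δ i.succ)), w) = f.app (op ⦋n⦌) (ULift.up ξ, w) := by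
    intro n ξ w
    obtain ⟨m, α, u', hnd, rfl⟩ := exists_nondeg U n w
    exact ind hX f i u' (fun j => H ⟨m, u'⟩ ((hs ⟨m, u'⟩).mpr hnd) j) _ n ξ α (le_refl _)
  apply NatTrans.ext
  funext nn
  refine ConcreteCategory.hom_ext _ _ fun z => ?_
  obtain ⟨⟨ξ⟩, w⟩ := z
  have : ((SSet.stdSimplex.map (σ i) ▷ U) ≫ ((SSet.stdSimplex.map (δ i.succ) ▷ U) ≫ f)).app nn
      (ULift.up ξ, w) = f.app nn (ULift.up ((ξ ≫ σ i) ≫ δ i.succ), w) := rfl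
  rw [this, Category.assoc]
  exact (key nn.unop.len ξ w).symm

open scoped Classical in
lemma part1 (X : SSet.{u}) (hX : SReg X) (q : ℕ)
    (hq : ∀ (m : ℕ) (x : X _⦋m + 1⦌), q < m + 1 → SDeg X x)
    (U : SSet.{u}) (s : Finset (Σ m : ℕ, U _⦋m⦌))
    (hs : ∀ x : Σ m : ℕ, U _⦋m⦌, x ∈ s ↔ ¬ SDeg U x.2)
    (p : ℕ) (f : (sHom U X) _⦋p + 1⦌) (hp : (∑ x ∈ s, (x.1 + 1)) * q < p + 1) :
    SDeg (sHom U X) f := by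
  by_contra hc
  have hc' : ∀ (i : Fin (p+1)) (y : (sHom U X) _⦋p⦌), f ≠ (sHom U X).map (σ i).op y := by
    intro i y hcon
    exact hc ⟨i, y, hcon⟩
  have f' : SSet.stdSimplex.obj ⦋p+1⦌ ⊗ U ⟶ X := f
  have hwit : ∀ i : Fin (p+1), ∃ (w : Σ m : ℕ, U _⦋m⦌) (_ : w ∈ s) (j : Fin (w.1+1)),
      ¬ SDeg X (elemEdge X (cyl (X := X) (U := U) (p := p) f w.2 j) i) := by
    intro i
    by_contra h
    push_neg at h
    exact hc' i ((SSet.stdSimplex.map (δ i.succ) ▷ U) ≫ f)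
      (main_deg hX s hs f i (fun w hw j => h w hw j))
  choose w hw j hnd using hwit
  let κ : Fin (p+1) → (Σ (a : {x // x ∈ s}), Fin (a.1.1+1)) := fun i => ⟨⟨w i, hw i⟩, j i⟩
  have hcardcod : Fintype.card (Σ (a : {x // x ∈ s}), Fin (a.1.1+1)) = ∑ x ∈ s, (x.1+1) := by
    rw [Fintype.card_sigma]
    simp only [Fintype.card_fin]
    exact Finset.sum_coe_sort s (fun x => x.1+1)
  have hlt : Fintype.card (Σ (a : {x // x ∈ s}), Fin (a.1.1+1)) * q
      < Fintype.card (Fin (p+1)) := by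
    rw [hcardcod, Fintype.card_fin]; exact hp
  obtain ⟨y₀, hy₀⟩ := Fintype.exists_lt_card_fiber_of_mul_lt_card κ hlt
  have hsub : (Finset.univ.filter fun i => κ i = y₀)
      ⊆ (Finset.univ.filter fun i : Fin (p+1) =>
          ¬ SDeg X (elemEdge X (cyl (X := X) (U := U) (p := p) f y₀.1.1.2 y₀.2) i)) := by
    intro i hi
    simp only [Finset.mem_filter, Finset.mem_univ, true_and] at hi ⊢
    have hrw : cyl (X := X) (U := U) (p := p) f (w i).2 (j i)
        = cyl (X := X) (U := U) (p := p) f y₀.1.1.2 y₀.2 :=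
      congrArg (fun (a : Σ (a : {x // x ∈ s}), Fin (a.1.1+1)) =>
        cyl (X := X) (U := U) (p := p) f a.1.1.2 a.2) hi
    exact hrw ▸ hnd i
  have := (Finset.card_le_card hsub).trans (card_nondeg_edges X q hq _)
  omega







lemma finite_hom (a b : SimplexCategory) : Finite (a ⟶ b) := by
  apply Finite.of_injective (fun g : a ⟶ b => (g.toOrderHom : Fin (a.len+1) → Fin (b.len+1)))
  intro g h e
  ext x : 3
  exact congrFun e x

lemma finite_obj (X : SSet.{u}) (hfin : Finite {x : Σ m : ℕ, X _⦋m⦌ // ¬ SDeg X x.2})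
    (n : ℕ) : Finite (X _⦋n⦌) := by
  haveI : ∀ y : {x : Σ m : ℕ, X _⦋m⦌ // ¬ SDeg X x.2},
      Finite ((⦋n⦌ : SimplexCategory) ⟶ ⦋y.1.1⦌) := fun y => finite_hom _ _
  apply Finite.of_surjective
    (fun t : Σ (y : {x : Σ m : ℕ, X _⦋m⦌ // ¬ SDeg X x.2}),
      ((⦋n⦌ : SimplexCategory) ⟶ ⦋y.1.1⦌) => X.map t.2.op t.1.1.2)
  intro x
  obtain ⟨m, α, x', hnd, hx⟩ := exists_nondeg X n x
  exact ⟨⟨⟨⟨m, x'⟩, hnd⟩, α⟩, hx.symm⟩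

lemma pair_deg {U : SSet.{u}} {p dU n : ℕ}
    (hU : ∀ (k : ℕ) (v : U _⦋k⦌), ¬ SDeg U v → k ≤ dU)
    (hn : p + dU < n + 1) (ξ : (⦋n+1⦌ : SimplexCategory) ⟶ ⦋p⦌) (w : U _⦋n+1⦌) :
    ∃ (k : Fin (n+1)) (ξ₀ : (⦋n⦌ : SimplexCategory) ⟶ ⦋p⦌) (w₀ : U _⦋n⦌),
      ξ = σ k ≫ ξ₀ ∧ w = U.map (σ k).op w₀ := by
  classical
  obtain ⟨m, α, u', hnd, hw⟩ := exists_nondeg U (n+1) w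
  have hm : m ≤ dU := hU m u' hnd
  have hflat : ∃ k : Fin (n+1), ξ.toOrderHom k.castSucc = ξ.toOrderHom k.succ ∧
      α.toOrderHom k.castSucc = α.toOrderHom k.succ := by
    by_contra h
    push_neg at h
    have hcover : (Finset.univ : Finset (Fin (n+1))) ⊆
        (Finset.univ.filter fun k : Fin (n+1) =>
          ξ.toOrderHom k.castSucc < ξ.toOrderHom k.succ) ∪
        (Finset.univ.filter fun k : Fin (n+1) =>
          α.toOrderHom k.castSucc < α.toOrderHom k.succ) := by
      intro k _
      rcases eq_or_lt_of_le (ξ.toOrderHom.monotone (Fin.castSucc_le_succ k)) with he | hlt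
      · rcases eq_or_lt_of_le (α.toOrderHom.monotone (Fin.castSucc_le_succ k)) with he2 | hlt2
        · exact absurd he2 (h k he)
        · exact Finset.mem_union_right _ (Finset.mem_filter.mpr ⟨Finset.mem_univ _, hlt2⟩)
      · exact Finset.mem_union_left _ (Finset.mem_filter.mpr ⟨Finset.mem_univ _, hlt⟩)
    have h1 : (Finset.univ.filter fun k : Fin (n+1) =>
        ξ.toOrderHom k.castSucc < ξ.toOrderHom k.succ).card ≤ p :=
      card_incr ξ.toOrderHom ξ.toOrderHom.monotone
    have h2 : (Finset.univ.filter fun k : Fin (n+1) =>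
        α.toOrderHom k.castSucc < α.toOrderHom k.succ).card ≤ m :=
      card_incr α.toOrderHom α.toOrderHom.monotone
    have h3 := Finset.card_le_card hcover
    have h4 := Finset.card_union_le
      (Finset.univ.filter fun k : Fin (n+1) =>
        ξ.toOrderHom k.castSucc < ξ.toOrderHom k.succ)
      (Finset.univ.filter fun k : Fin (n+1) =>
        α.toOrderHom k.castSucc < α.toOrderHom k.succ)
    rw [Finset.card_univ, Fintype.card_fin] at h3
    omega
  obtain ⟨k, hkξ, hkα⟩ := hflat
  refine ⟨k, δ k.succ ≫ ξ, U.map (δ k.succ ≫ α).op u', factor_deg ξ k hkξ, ?_⟩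
  have : U.map (σ k).op (U.map (δ k.succ ≫ α).op u') = U.map α.op u' := by
    rw [← FunctorToTypes.map_comp_apply, ← op_comp, ← factor_deg α k hkα]
  exact hw.trans this.symm

open scoped Classical in
lemma sections_finite_hom (X U : SSet.{u}) (hXfin : ∀ n : ℕ, Finite (X _⦋n⦌))
    (hUfin : ∀ n : ℕ, Finite (U _⦋n⦌))
    (dU : ℕ) (hU : ∀ (k : ℕ) (v : U _⦋k⦌), ¬ SDeg U v → k ≤ dU) (p : ℕ) :
    Finite (SSet.stdSimplex.obj ⦋p⦌ ⊗ U ⟶ X) := by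
  haveI : ∀ k : ℕ, Finite ((SSet.stdSimplex.obj ⦋p⦌ ⊗ U).obj (op ⦋k⦌)) := by
    intro k
    haveI := finite_hom (⦋k⦌ : SimplexCategory) ⦋p⦌
    haveI := hUfin k
    exact Finite.instProd (α := ULift ((⦋k⦌ : SimplexCategory) ⟶ ⦋p⦌)) (β := U _⦋k⦌)
  haveI : ∀ k : Fin (p + dU + 1),
      Finite ((SSet.stdSimplex.obj ⦋p⦌ ⊗ U).obj (op ⦋(k : ℕ)⦌) ⟶ X.obj (op ⦋(k : ℕ)⦌)) := by
    intro k
    haveI := hXfin (k : ℕ)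
    exact Finite.of_equiv _ TypeCat.homEquiv.symm
  apply Finite.of_injective (fun (f : SSet.stdSimplex.obj ⦋p⦌ ⊗ U ⟶ X) =>
    (fun (k : Fin (p + dU + 1)) => f.app (op ⦋(k : ℕ)⦌)))
  intro f g hfg
  have comp : ∀ n : ℕ, f.app (op ⦋n⦌) = g.app (op ⦋n⦌) := by
    intro n
    induction n with
    | zero => exact congrFun hfg ⟨0, by omega⟩
    | succ n ih =>
      by_cases hnM : n + 1 ≤ p + dU
      · exact congrFun hfg ⟨n+1, by omega⟩
      · refine ConcreteCategory.hom_ext _ _ fun z => ?_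
        obtain ⟨⟨ξ⟩, w⟩ := z
        obtain ⟨k, ξ₀, w₀, hξ, hw⟩ := pair_deg hU (by omega) ξ w
        rw [hξ, hw]
        have e1 : f.app (op ⦋n+1⦌) (ULift.up (σ k ≫ ξ₀), U.map (σ k).op w₀)
            = X.map (σ k).op (f.app (op ⦋n⦌) (ULift.up ξ₀, w₀)) := f_nat f (σ k) ξ₀ w₀
        have e2 : g.app (op ⦋n+1⦌) (ULift.up (σ k ≫ ξ₀), U.map (σ k).op w₀)
            = X.map (σ k).op (g.app (op ⦋n⦌) (ULift.up ξ₀, w₀)) := f_nat g (σ k) ξ₀ w₀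
        rw [e1, e2, ih]
  apply NatTrans.ext
  funext nn
  exact comp nn.unop.len






lemma part2 (X : SSet.{u}) (hX : SReg X) (q : ℕ)
    (hq : ∀ (m : ℕ) (x : X _⦋m + 1⦌), q < m + 1 → SDeg X x)
    (U : SSet.{u}) (s : Finset (Σ m : ℕ, U _⦋m⦌))
    (hs : ∀ x : Σ m : ℕ, U _⦋m⦌, x ∈ s ↔ ¬ SDeg U x.2)
    (hfinX : Finite {x : Σ m : ℕ, X _⦋m⦌ // ¬ SDeg X x.2}) :
    Finite {x : Σ m : ℕ, (sHom U X) _⦋m⦌ // ¬ SDeg (sHom U X) x.2} := by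
  set D := (∑ x ∈ s, (x.1 + 1)) * q with hD
  have hXfin : ∀ n, Finite (X _⦋n⦌) := finite_obj X hfinX
  have hUfin' : Finite {x : Σ m : ℕ, U _⦋m⦌ // ¬ SDeg U x.2} :=
    Finite.of_injective (fun y => (⟨y.1, (hs y.1).mpr y.2⟩ : {x // x ∈ s}))
      (by
      intro a b h
      simp only [Subtype.mk.injEq] at h
      exact Subtype.ext h)
  have hUfin : ∀ n, Finite (U _⦋n⦌) := finite_obj U hUfin'
  set dU := s.sup (fun x => x.1) with hdU
  have hU : ∀ (k : ℕ) (v : U _⦋k⦌), ¬ SDeg U v → k ≤ dU := fun k v hv =>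
    Finset.le_sup (f := fun x : Σ m : ℕ, U _⦋m⦌ => x.1) ((hs ⟨k, v⟩).mpr hv)
  haveI : ∀ k : Fin (D+1), Finite ((sHom U X).obj (op ⦋(k : ℕ)⦌)) := fun k =>
    sections_finite_hom X U hXfin hUfin dU hU (k : ℕ)
  have hbound : ∀ (y : {x : Σ m : ℕ, (sHom U X) _⦋m⦌ // ¬ SDeg (sHom U X) x.2}),
      y.1.1 < D + 1 := by
    rintro ⟨⟨my, fy⟩, hynd⟩
    match my, fy, hynd with
    | 0, fy, hynd => exact Nat.succ_pos D
    | n+1, fy, hynd =>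
      by_contra hy
      push_neg at hy
      have hy' : D + 1 ≤ n + 1 := hy
      exact hynd (part1 X hX q hq U s hs n fy (Nat.lt_of_succ_le hy'))
  apply Finite.of_injective (fun y : {x : Σ m : ℕ, (sHom U X) _⦋m⦌ // ¬ SDeg (sHom U X) x.2} =>
    (⟨⟨y.1.1, hbound y⟩, y.1.2⟩ : Σ k : Fin (D+1), (sHom U X).obj (op ⦋(k : ℕ)⦌)))
  rintro ⟨⟨ma, fa⟩, hnda⟩ ⟨⟨mb, fb⟩, hndb⟩ hab
  obtain ⟨h1, h2⟩ := Sigma.mk.inj_iff.mp hab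
  have hm : ma = mb := congrArg Fin.val h1
  subst hm
  have hf : fa = fb := eq_of_heq h2
  subst hf
  rfl


end Stmt17

/-- If `X` is regular of dimension `≤ q` and `U` is finite, with `s` the finite set of
non-degenerate simplices of `U`, then `dim Hom(U, X) ≤ (∑_{u ∈ s} (|u|+1)) · q`;
and if moreover `X` is finite then `Hom(U, X)` is finite. -/
theorem stmt_17 (X : SSet.{u}) (hX : SReg X) (q : ℕ)
    (hq : ∀ (m : ℕ) (x : X _⦋m + 1⦌), q < m + 1 → SDeg X x)
    (U : SSet.{u}) (s : Finset (Σ m : ℕ, U _⦋m⦌))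
    (hs : ∀ x : Σ m : ℕ, U _⦋m⦌, x ∈ s ↔ ¬ SDeg U x.2) :
    (∀ (p : ℕ) (f : (sHom U X) _⦋p + 1⦌), (∑ x ∈ s, (x.1 + 1)) * q < p + 1 →
      SDeg (sHom U X) f) ∧
    (Finite {x : Σ m : ℕ, X _⦋m⦌ // ¬ SDeg X x.2} →
      Finite {x : Σ m : ℕ, (sHom U X) _⦋m⦌ // ¬ SDeg (sHom U X) x.2}) := by
  exact ⟨fun p f hp => Stmt17.part1 X hX q hq U s hs p f hp,
    fun hfin => Stmt17.part2 X hX q hq U s hs hfin⟩
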